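/- For the generalized quaternion group Q_{2^k} with k > 3, exactly one subgroup (the cyclic subgroup of index 2) attains the maximum Chermak–Delgado measure; in particular m*(Q_{2^k}) = (2^{k-1})². -/
import Mathlib

/-- The Chermak–Delgado measure of a subgroup. -/
noncomputable def cdMeasure {G : Type*} [Group G] (H : Subgroup G) : ℕ :=
  Nat.card H * Nat.card (Subgroup.centralizer (H : Set G))

namespace CDQuat

open QuaternionGroup Subgroup

variable {n : ℕ}

/-- The cyclic subgroup of index 2 consisting of all `a i`. -/
def A (n : ℕ) : Subgroup (QuaternionGroup n) where
  carrier := Set.range QuaternionGroup.a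
  one_mem' := ⟨0, rfl⟩
  mul_mem' := by rintro _ _ ⟨i, rfl⟩ ⟨j, rfl⟩; exact ⟨i + j, rfl⟩
  inv_mem' := by rintro _ ⟨i, rfl⟩; exact ⟨-i, rfl⟩

lemma a_mem (i : ZMod (2 * n)) : a i ∈ A n := ⟨i, rfl⟩

lemma xa_notMem (j : ZMod (2 * n)) : xa j ∉ A n := by
  rintro ⟨i, h⟩; exact absurd h (by simp)

lemma a_injective : Function.Injective (QuaternionGroup.a (n := n)) := by
  intro i j h; injection h

lemma card_A [NeZero n] : Nat.card (A n) = 2 * n := by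
  have h1 : Nat.card (A n) = Nat.card (Set.range (QuaternionGroup.a (n := n))) := rfl
  rw [h1, Nat.card_range_of_injective a_injective, Nat.card_zmod]

lemma two_mul_eq_zero (hn : 4 ≤ n) {i : ZMod (2 * n)} (h : 2 * i = 0) :
    i = 0 ∨ i = (n : ZMod (2 * n)) := by
  haveI : NeZero n := ⟨by omega⟩
  haveI : NeZero (2 * n) := ⟨by omega⟩
  have hv : ((2 * i.val : ℕ) : ZMod (2 * n)) = 0 := by
    push_cast [ZMod.natCast_val, ZMod.cast_id]
    rw [← h]
  rw [ZMod.natCast_eq_zero_iff] at hv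
  have hlt := ZMod.val_lt i
  obtain ⟨c, hc⟩ := hv
  have hc2 : c < 2 := by nlinarith
  have : i.val = 0 ∨ i.val = n := by interval_cases c <;> omega
  rcases this with h' | h'
  · left; rw [← ZMod.natCast_zmod_val i, h']; simp
  · right; rw [← ZMod.natCast_zmod_val i, h']

lemma two_ne_zero (hn : 4 ≤ n) : (2 : ZMod (2 * n)) * 1 ≠ 0 := by
  haveI : NeZero (2 * n) := ⟨by omega⟩
  rw [mul_one]
  intro h
  have : ((2 : ℕ) : ZMod (2 * n)) = 0 := by exact_mod_cast h
  rw [ZMod.natCast_eq_zero_iff] at this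
  have := Nat.le_of_dvd (by norm_num) this
  omega

lemma n_add_n : (n : ZMod (2 * n)) + n = 0 := by
  have : ((2 * n : ℕ) : ZMod (2 * n)) = 0 := ZMod.natCast_self _
  push_cast at this
  linear_combination this

/-- If `K` contains an `a i` with `2 i ≠ 0`, its centralizer is inside `A n`. -/
lemma centralizer_le_A {K : Subgroup (QuaternionGroup n)} {i : ZMod (2 * n)}
    (hi : a i ∈ K) (h2 : 2 * i ≠ 0) : centralizer (K : Set (QuaternionGroup n)) ≤ A n := by
  rintro (j | j) hg
  · exact a_mem j
  · exfalso
    rw [mem_centralizer_iff] at hg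
    have := hg (a i) hi
    rw [a_mul_xa, xa_mul_a] at this
    injection this with h
    exact h2 (by linear_combination - h)

/-- If `K` contains some `xa j`, its centralizer is inside a 4-element set. -/
lemma centralizer_subset_four (hn : 4 ≤ n) {K : Subgroup (QuaternionGroup n)}
    {j : ZMod (2 * n)} (hj : xa j ∈ K) :
    (centralizer (K : Set (QuaternionGroup n)) : Set (QuaternionGroup n)) ⊆
      {a 0, a (n : ZMod (2 * n)), xa j, xa (j + (n : ZMod (2 * n)))} := by
  rintro (i | i) hg <;> rw [SetLike.mem_coe, mem_centralizer_iff] at hg <;>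
      have := hg (xa j) hj
  · rw [xa_mul_a, a_mul_xa] at this
    injection this with h
    have h2 : 2 * i = 0 := by linear_combination h
    rcases two_mul_eq_zero hn h2 with h' | h' <;> subst h' <;> simp
  · rw [xa_mul_xa, xa_mul_xa] at this
    injection this with h
    have h2 : 2 * (i - j) = 0 := by linear_combination h
    rcases two_mul_eq_zero hn h2 with h' | h'
    · have : i = j := by linear_combination h'
      subst this; simp
    · have : i = j + n := by linear_combination h'
      subst this; simp

lemma card_le_of_subset_coe {K : Subgroup (QuaternionGroup n)} {s : Set (QuaternionGroup n)}
    [NeZero n] (h : (K : Set (QuaternionGroup n)) ⊆ s) : Nat.card K ≤ s.ncard := by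
  rw [← SetLike.coe_sort_coe, Nat.card_coe_set_eq]
  exact Set.ncard_le_ncard h (Set.toFinite s)

lemma ncard_four (x y z w : QuaternionGroup n) [NeZero n] :
    ({x, y, z, w} : Set (QuaternionGroup n)).ncard ≤ 4 := by
  apply le_trans (Set.ncard_insert_le _ _)
  have h2 := Set.ncard_insert_le y ({z, w} : Set (QuaternionGroup n))
  have h3 := Set.ncard_insert_le z ({w} : Set (QuaternionGroup n))
  rw [Set.ncard_singleton] at h3
  omega

lemma ncard_two (x y : QuaternionGroup n) [NeZero n] :
    ({x, y} : Set (QuaternionGroup n)).ncard ≤ 2 := by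
  have h2 := Set.ncard_insert_le x ({y} : Set (QuaternionGroup n))
  rw [Set.ncard_singleton] at h2
  omega

lemma centralizer_A_eq (hn : 4 ≤ n) :
    centralizer ((A n : Subgroup (QuaternionGroup n)) : Set (QuaternionGroup n)) = A n := by
  apply le_antisymm (centralizer_le_A (a_mem 1) (two_ne_zero hn))
  rintro _ ⟨i, rfl⟩
  rw [mem_centralizer_iff]
  rintro _ ⟨j, rfl⟩
  rw [a_mul_a, a_mul_a, add_comm]

lemma cdMeasure_A (hn : 4 ≤ n) : cdMeasure (A n) = 4 * n ^ 2 := by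
  haveI : NeZero n := ⟨by omega⟩
  rw [cdMeasure, centralizer_A_eq hn, card_A]
  ring

end CDQuat

namespace CDQuat
open QuaternionGroup Subgroup

lemma cdMeasure_lt (hn : 4 ≤ n) {K : Subgroup (QuaternionGroup n)} (hK : K ≠ A n) :
    cdMeasure K < 4 * n ^ 2 := by
  haveI : NeZero n := ⟨by omega⟩
  have hcardG : Nat.card (QuaternionGroup n) = 4 * n := by
    rw [Nat.card_eq_fintype_card, QuaternionGroup.card]
  have hKtop : Nat.card K ≤ 4 * n := hcardG ▸ card_le_card_group K
  have hCtop : Nat.card (centralizer (K : Set (QuaternionGroup n))) ≤ 4 * n :=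
    hcardG ▸ card_le_card_group _
  by_cases hx : ∃ j, xa j ∈ K
  · obtain ⟨j, hj⟩ := hx
    have hC4 : Nat.card (centralizer (K : Set (QuaternionGroup n))) ≤ 4 :=
      le_trans (card_le_of_subset_coe (centralizer_subset_four hn hj)) (ncard_four _ _ _ _)
    by_cases hai : ∃ i, a i ∈ K ∧ 2 * i ≠ 0
    · obtain ⟨i, hiK, hi2⟩ := hai
      have hC2 : Nat.card (centralizer (K : Set (QuaternionGroup n))) ≤ 2 := by
        refine le_trans (card_le_of_subset_coe ?_) (ncard_two (a 0) (a (n : ZMod (2 * n))))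
        intro g hg
        have hg1 : g ∈ A n := centralizer_le_A hiK hi2 hg
        have hg2 := centralizer_subset_four hn hj hg
        rcases hg2 with h | h | h | h
        · exact Or.inl h
        · exact Or.inr h
        · exact absurd (h ▸ hg1) (xa_notMem j)
        · exact absurd (h ▸ hg1) (xa_notMem _)
      calc cdMeasure K ≤ 4 * n * 2 := Nat.mul_le_mul hKtop hC2
        _ < 4 * n ^ 2 := by nlinarith
    · push_neg at hai
      have hK4 : Nat.card K ≤ 4 := by
        refine le_trans (card_le_of_subset_coe ?_)
          (ncard_four (a 0) (a (n : ZMod (2 * n))) (xa j) (xa (j + (n : ZMod (2 * n)))))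
        rintro (i | i) hgK
        · rcases two_mul_eq_zero hn (hai i hgK) with h' | h' <;> subst h' <;> simp
        · have hmem : a ((n : ZMod (2 * n)) + ((n : ZMod (2 * n)) + i) - j) ∈ K := by
            rw [← xa_mul_xa]
            exact mul_mem hj (inv_mem hgK)
          have heq : (n : ZMod (2 * n)) + ((n : ZMod (2 * n)) + i) - j = i - j := by
            linear_combination n_add_n (n := n)
          rw [heq] at hmem
          rcases two_mul_eq_zero hn (hai _ hmem) with h' | h'
          · have : i = j := by linear_combination h'
            subst this; simp
          · have : i = j + (n : ZMod (2 * n)) := by linear_combination h'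
            subst this; simp
      calc cdMeasure K ≤ 4 * 4 := Nat.mul_le_mul hK4 hC4
        _ < 4 * n ^ 2 := by nlinarith
  · push_neg at hx
    have hKA : K ≤ A n := by
      rintro (i | i) hg
      · exact a_mem i
      · exact absurd hg (hx i)
    have hcardKA : Nat.card K ≤ 2 * n := le_trans (card_le_of_le hKA) (le_of_eq card_A)
    by_cases hai : ∃ i, a i ∈ K ∧ 2 * i ≠ 0
    · obtain ⟨i, hiK, hi2⟩ := hai
      have hC : Nat.card (centralizer (K : Set (QuaternionGroup n))) ≤ 2 * n :=
        le_trans (card_le_of_le (centralizer_le_A hiK hi2)) (le_of_eq card_A)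
      have hKlt : Nat.card K < 2 * n := by
        refine lt_of_le_of_ne hcardKA fun h => hK ?_
        exact eq_of_le_of_card_ge hKA (by rw [card_A, ← h])
      calc cdMeasure K ≤ Nat.card K * (2 * n) := Nat.mul_le_mul_left _ hC
        _ < (2 * n) * (2 * n) := by
            have h2n : 0 < 2 * n := by omega
            exact (Nat.mul_lt_mul_right h2n).mpr hKlt
        _ = 4 * n ^ 2 := by ring
    · push_neg at hai
      have hK2 : Nat.card K ≤ 2 := by
        refine le_trans (card_le_of_subset_coe ?_) (ncard_two (a 0) (a (n : ZMod (2 * n))))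
        rintro (i | i) hgK
        · rcases two_mul_eq_zero hn (hai i hgK) with h' | h' <;> subst h' <;> simp
        · exact absurd hgK (hx i)
      calc cdMeasure K ≤ 2 * (4 * n) := Nat.mul_le_mul hK2 hCtop
        _ < 4 * n ^ 2 := by nlinarith

lemma isCyclic_A [NeZero n] : IsCyclic (A n) := by
  haveI : NeZero (2 * n) := ⟨by have := NeZero.pos n; omega⟩
  refine ⟨⟨⟨a 1, a_mem 1⟩, ?_⟩⟩
  rintro ⟨_, i, rfl⟩
  refine ⟨(i.val : ℤ), ?_⟩
  apply Subtype.ext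
  push_cast [SubgroupClass.coe_zpow]
  rw [zpow_natCast, a_one_pow, ZMod.natCast_zmod_val]

lemma index_A [NeZero n] : (A n).index = 2 := by
  have h := Subgroup.card_mul_index (A n)
  rw [card_A, Nat.card_eq_fintype_card, QuaternionGroup.card] at h
  have hn := NeZero.pos n
  have h2 : 2 * (A n).index = 4 := Nat.eq_of_mul_eq_mul_left hn (by linarith)
  omega

end CDQuat
/-- For the generalized quaternion group `Q_{2^k}` (`k > 3`), realized as
`QuaternionGroup (2^(k-2))` (of order `4 * 2^(k-2) = 2^k`), exactly one subgroup
attains the maximum Chermak–Delgado measure, namely the cyclic subgroup of index 2,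
and the maximum measure is `(2^(k-1))^2`. -/
theorem cd_of_generalized_quaternion (k : ℕ) (hk : 3 < k) :
    (∃! H : Subgroup (QuaternionGroup (2 ^ (k - 2))),
        ∀ K : Subgroup (QuaternionGroup (2 ^ (k - 2))), cdMeasure K ≤ cdMeasure H) ∧
    ∀ H : Subgroup (QuaternionGroup (2 ^ (k - 2))),
      (∀ K : Subgroup (QuaternionGroup (2 ^ (k - 2))), cdMeasure K ≤ cdMeasure H) →
        H.index = 2 ∧ IsCyclic H ∧ cdMeasure H = (2 ^ (k - 1)) ^ 2 := by
  have hn : 4 ≤ 2 ^ (k - 2) := by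
    calc (4 : ℕ) = 2 ^ 2 := by norm_num
      _ ≤ 2 ^ (k - 2) := Nat.pow_le_pow_right (by norm_num) (by omega)
  haveI : NeZero (2 ^ (k - 2)) := ⟨by omega⟩
  have hmax : ∀ K : Subgroup (QuaternionGroup (2 ^ (k - 2))), K ≠ CDQuat.A (2 ^ (k - 2)) →
      cdMeasure K < cdMeasure (CDQuat.A (2 ^ (k - 2))) := by
    intro K hK
    rw [CDQuat.cdMeasure_A hn]
    exact CDQuat.cdMeasure_lt hn hK
  have hAmax : ∀ K : Subgroup (QuaternionGroup (2 ^ (k - 2))),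
      cdMeasure K ≤ cdMeasure (CDQuat.A (2 ^ (k - 2))) := by
    intro K
    by_cases h : K = CDQuat.A (2 ^ (k - 2))
    · exact le_of_eq (by rw [h])
    · exact (hmax K h).le
  have huniq : ∀ H : Subgroup (QuaternionGroup (2 ^ (k - 2))),
      (∀ K : Subgroup (QuaternionGroup (2 ^ (k - 2))), cdMeasure K ≤ cdMeasure H) →
      H = CDQuat.A (2 ^ (k - 2)) := by
    intro H hH
    by_contra hne
    exact (hmax H hne).not_ge (hH _)
  refine ⟨⟨CDQuat.A (2 ^ (k - 2)), hAmax, fun H hH => huniq H hH⟩, ?_⟩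
  intro H hH
  obtain rfl := huniq H hH
  refine ⟨CDQuat.index_A, CDQuat.isCyclic_A, ?_⟩
  rw [CDQuat.cdMeasure_A hn]
  have hk1 : 2 ^ (k - 1) = 2 * 2 ^ (k - 2) := by
    rw [show k - 1 = (k - 2) + 1 by omega, pow_succ]
    ring
  rw [hk1]
  ring
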